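/- arXiv:2208.03185 — 2 statements merged into one kernel-verified Lean document; each statement's English description precedes it below -/
import Mathlib

section
/- Let p ∈ (1, 2] and C_p = ((p-1)/p)^{p/2} · ((2-p)/(p-1))^{(2-p)/2} (interpreted as 1/2 when p = 2, taking 0⁰ = 1). Then for all x ∈ ℝ, 1 + x + C_p|x|^p > 0, so log(1 + x + C_p|x|^p) is well-defined. -/
noncomputable def catoniC (p : ℝ) : ℝ :=
  ((p - 1) / p) ^ (p / 2) * ((2 - p) / (p - 1)) ^ ((2 - p) / 2)

open Real

lemma ppss_gt_one {p : ℝ} (hp1 : 1 < p) (hp2 : p < 2) :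
    1 < p ^ p * (2 - p) ^ (2 - p) := by
  have hp : (0 : ℝ) < p := by linarith
  have hs : (0 : ℝ) < 2 - p := by linarith
  have hne : p ≠ 2 - p := by intro h; linarith
  have hconv := Real.strictConvexOn_mul_log.2 (le_of_lt hp) (le_of_lt hs) hne
    (by norm_num : (0:ℝ) < 1/2) (by norm_num : (0:ℝ) < 1/2) (by norm_num)
  have h1 : (1/2 : ℝ) • p + (1/2 : ℝ) • (2 - p) = 1 := by
    simp only [smul_eq_mul]; ring
  rw [h1] at hconv
  simp only [smul_eq_mul, Real.log_one, mul_zero, one_mul] at hconv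
  have hlog : 0 < p * Real.log p + (2 - p) * Real.log (2 - p) := by linarith
  have h2 : p ^ p * (2 - p) ^ (2 - p) =
      Real.exp (p * Real.log p + (2 - p) * Real.log (2 - p)) := by
    rw [Real.exp_add, Real.rpow_def_of_pos hp, Real.rpow_def_of_pos hs,
      mul_comm (Real.log p) p, mul_comm (Real.log (2-p)) (2-p)]
  rw [h2]
  calc (1:ℝ) = Real.exp 0 := Real.exp_zero.symm
    _ < _ := Real.exp_lt_exp.2 hlog

lemma key_const_ineq {p : ℝ} (hp1 : 1 < p) (hp2 : p < 2) :
    ((p - 1) / p) ^ (p - 1) < p * catoniC p := by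
  have hp : (0 : ℝ) < p := by linarith
  have hs : (0 : ℝ) < 2 - p := by linarith
  have hp1' : (0 : ℝ) < p - 1 := by linarith
  have ha : (0 : ℝ) < (p - 1) / p := div_pos hp1' hp
  have hb : (0 : ℝ) < (2 - p) / (p - 1) := div_pos hs hp1'
  set a := (p - 1) / p with ha_def
  set b := (2 - p) / (p - 1) with hb_def
  set s := 2 - p with hs_def
  have hab : a * b = s / p := by
    rw [ha_def, hb_def, hs_def]
    field_simp
  have hfact : p * catoniC p = a ^ (p - 1) * (p ^ p * s ^ s) ^ ((1:ℝ)/2) := by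
    have e1 : a ^ (p / 2) = a ^ (p - 1) * a ^ (s / 2) := by
      rw [← Real.rpow_add ha]
      congr 1
      rw [hs_def]; ring
    have e2 : a ^ (s / 2) * b ^ (s / 2) = (s / p) ^ (s / 2) := by
      rw [← Real.mul_rpow ha.le hb.le, hab]
    have e3 : (p ^ p * s ^ s) ^ ((1:ℝ)/2) = p ^ (p/2) * s ^ (s/2) := by
      rw [Real.mul_rpow (Real.rpow_nonneg hp.le _) (Real.rpow_nonneg hs.le _),
        ← Real.rpow_mul hp.le, ← Real.rpow_mul hs.le, mul_one_div, mul_one_div]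
    have e4 : p * (s / p) ^ (s/2) = p ^ (p/2) * s ^ (s/2) := by
      have h12 : p ^ (p/2) * s ^ (s/2) * p ^ (s/2) = p * s ^ (s/2) := by
        rw [mul_right_comm, ← Real.rpow_add hp]
        have : p / 2 + s / 2 = 1 := by rw [hs_def]; ring
        rw [this, Real.rpow_one]
      rw [Real.div_rpow hs.le hp.le, mul_div_assoc',
        div_eq_iff (ne_of_gt (Real.rpow_pos_of_pos hp _))]
      exact h12.symm
    rw [e3, ← e4]
    unfold catoniC
    rw [← ha_def, ← hb_def, ← hs_def, e1]
    calc p * (a ^ (p - 1) * a ^ (s / 2) * b ^ (s / 2))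
        = a ^ (p - 1) * (p * (a ^ (s / 2) * b ^ (s / 2))) := by ring
      _ = a ^ (p - 1) * (p * (s / p) ^ (s / 2)) := by rw [e2]
  rw [hfact]
  have h1 : (1:ℝ) < (p ^ p * s ^ s) ^ ((1:ℝ)/2) := by
    rw [Real.one_lt_rpow_iff_of_pos (by positivity)]
    exact Or.inl ⟨ppss_gt_one hp1 hp2, by norm_num⟩
  calc a ^ (p - 1) = a ^ (p - 1) * 1 := (mul_one _).symm
    _ < a ^ (p - 1) * (p ^ p * s ^ s) ^ ((1:ℝ)/2) :=
        mul_lt_mul_of_pos_left h1 (Real.rpow_pos_of_pos ha _)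

lemma catoniC_pos {p : ℝ} (hp1 : 1 < p) (hp2 : p < 2) : 0 < catoniC p := by
  have hp : (0 : ℝ) < p := by linarith
  have hs : (0 : ℝ) < 2 - p := by linarith
  have hp1' : (0 : ℝ) < p - 1 := by linarith
  unfold catoniC
  have h1 : (0:ℝ) < (p - 1) / p := div_pos hp1' hp
  have h2 : (0:ℝ) < (2 - p) / (p - 1) := div_pos hs hp1'
  positivity

lemma catoni_lt_one {p : ℝ} (hp1 : 1 < p) (hp2 : p < 2) (t : ℝ) (ht : 0 ≤ t) :
    t < 1 + catoniC p * t ^ p := by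
  set C := catoniC p with hC_def
  have hC : 0 < C := catoniC_pos hp1 hp2
  have hpC : 0 < p * C := by positivity
  have hpp : (0:ℝ) < p := by linarith
  set q := p / (p - 1) with hq_def
  have hpq : p.HolderConjugate q := Real.HolderConjugate.conjExponent hp1
  set lam := (p * C) ^ ((1:ℝ)/p) with hlam_def
  have hlam : 0 < lam := Real.rpow_pos_of_pos hpC _
  have hy := Real.young_inequality_of_nonneg (mul_nonneg hlam.le ht)
    (le_of_lt (inv_pos.2 hlam)) hpq
  have hlhs : lam * t * lam⁻¹ = t := by field_simp
  rw [hlhs] at hy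
  have hlamp : lam ^ p = p * C := by
    rw [hlam_def, ← Real.rpow_mul hpC.le, one_div,
      inv_mul_cancel₀ hpq.ne_zero, Real.rpow_one]
  have h1 : (lam * t) ^ p / p = C * t ^ p := by
    rw [Real.mul_rpow hlam.le ht, hlamp]
    field_simp
  have hL : 0 < lam ^ q := Real.rpow_pos_of_pos hlam _
  have hlamq : q⁻¹ < lam ^ q := by
    have hanneg : (0:ℝ) ≤ (p-1)/p := le_of_lt (div_pos (by linarith) hpp)
    have hstep : ((p-1)/p) ^ ((p-1) : ℝ) < p * C := key_const_ineq hp1 hp2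
    have hqp : 0 < q / p := div_pos hpq.symm.pos hpq.pos
    have h2 := Real.rpow_lt_rpow (Real.rpow_nonneg hanneg _) hstep hqp
    have h3 : (((p-1)/p) ^ ((p-1):ℝ)) ^ (q/p) = (p-1)/p := by
      rw [← Real.rpow_mul hanneg]
      have he : (p - 1) * (q / p) = 1 := by
        have hne1 : p - 1 ≠ 0 := by intro h; linarith [sub_eq_zero.mp h]
        have hne2 : p ≠ 0 := by linarith
        rw [hq_def]; field_simp
      rw [he, Real.rpow_one]
    have h4 : (p * C) ^ (q/p) = lam ^ q := by
      rw [hlam_def, ← Real.rpow_mul hpC.le]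
      congr 1
      field_simp
    rw [h3, h4] at h2
    have h5 : q⁻¹ = (p-1)/p := by
      rw [hq_def]
      rw [inv_div]
    rw [h5]
    exact h2
  have hK : (lam⁻¹) ^ q / q < 1 := by
    rw [Real.inv_rpow hlam.le, div_lt_one hpq.symm.pos]
    rw [inv_lt_comm₀ hL hpq.symm.pos]
    exact hlamq
  calc t ≤ (lam * t) ^ p / p + (lam⁻¹) ^ q / q := hy
    _ = C * t ^ p + (lam⁻¹) ^ q / q := by rw [h1]
    _ < C * t ^ p + 1 := by linarith
    _ = 1 + C * t ^ p := by ring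

theorem catoni_log_well_defined (p : ℝ) (hp : p ∈ Set.Ioc (1 : ℝ) 2) (x : ℝ) :
    0 < 1 + x + catoniC p * |x| ^ p := by
  obtain ⟨hp1, hp2⟩ := hp
  rcases eq_or_lt_of_le hp2 with h2 | h2
  · -- p = 2
    subst h2
    have hC : catoniC 2 = 1/2 := by
      unfold catoniC
      norm_num
    rw [hC]
    have hx2 : |x| ^ (2:ℝ) = x ^ 2 := by
      rw [show (2:ℝ) = ((2:ℕ):ℝ) by norm_num, Real.rpow_natCast, sq_abs]
    rw [hx2]
    nlinarith [sq_nonneg (x + 1)]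
  · have hC : 0 < catoniC p := catoniC_pos hp1 h2
    rcases le_or_gt 0 x with hx | hx
    · have : 0 ≤ catoniC p * |x| ^ p :=
        mul_nonneg hC.le (Real.rpow_nonneg (abs_nonneg x) p)
      linarith
    · have habs : |x| = -x := abs_of_neg hx
      have := catoni_lt_one hp1 h2 (-x) (by linarith)
      rw [habs]
      linarith
end

section
/- Let X_1, X_2, ... be i.i.d. with mean μ and E|X_1 - μ|^p ≤ v_p, p ∈ (1,2], and let φ and (λ_i) be as above. Then for any α ∈ (0,1), with probability at least 1 - α, for all n ≥ 1 simultaneously: -log(2/α) - C_p v_p Σ_{i=1}^n λ_i^p ≤ Σ_{i=1}^n φ(λ_i(X_i - μ)) ≤ log(2/α) + C_p v_p Σ_{i=1}^n λ_i^p. In particular the sets I_n(α) = {x : |Σφ(λ_i(X_i - x))| ≤ log(2/α) + C_p v_p Σλ_i^p} form a (1-α)-confidence sequence for μ. -/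
open MeasureTheory ProbabilityTheory
open scoped ENNReal

lemma catoniC_nonneg {p : ℝ} (hp : p ∈ Set.Ioc (1 : ℝ) 2) : 0 ≤ catoniC p := by
  obtain ⟨h1, h2⟩ := hp
  apply mul_nonneg <;> apply Real.rpow_nonneg <;>
    [exact div_nonneg (by linarith) (by linarith);
     exact div_nonneg (by linarith) (by linarith)]

lemma catoni_young {p : ℝ} (hp1 : 1 < p) {y : ℝ} (hy : 0 ≤ y) :
    y ≤ 1 + (((p - 1) / p) ^ (p - 1) / p) * y ^ p := by
  have hp0 : (0:ℝ) < p := by linarith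
  have hq := Real.HolderConjugate.conjExponent hp1
  set q : ℝ := Real.conjExponent p with hqdef
  have hqpos : 0 < q := hq.symm.pos
  set s : ℝ := ((p - 1) / p) ^ ((p - 1) / p) with hsdef
  have hbase : (0:ℝ) < (p - 1) / p := div_pos (by linarith) hp0
  have hs : 0 < s := Real.rpow_pos_of_pos hbase _
  have hy2 : y = (s * y) * s⁻¹ := by field_simp
  have hyoung := Real.young_inequality_of_nonneg (mul_nonneg hs.le hy) (inv_nonneg.2 hs.le) hq
  have hsp : s ^ p = ((p - 1) / p) ^ (p - 1) := by
    rw [hsdef, ← Real.rpow_mul hbase.le, div_mul_cancel₀ _ hp0.ne']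
  have hsq : s⁻¹ ^ q = p / (p - 1) := by
    rw [hsdef, ← Real.rpow_neg_one (((p - 1) / p) ^ ((p - 1) / p)),
      ← Real.rpow_mul hbase.le, ← Real.rpow_mul hbase.le]
    rw [show (p - 1) / p * -1 * q = -(((p - 1) * q) / p) by ring,
      hq.sub_one_mul_conj, div_self hp0.ne']
    rw [Real.rpow_neg_one, inv_div]
  have hqval : (p / (p - 1)) / q = 1 := by
    rw [← hq.conjugate_eq, div_self hq.symm.ne_zero]
  have hmul : (s * y) ^ p = s ^ p * y ^ p := Real.mul_rpow hs.le hy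
  calc y = (s * y) * s⁻¹ := hy2
    _ ≤ (s * y) ^ p / p + s⁻¹ ^ q / q := hyoung
    _ = (((p - 1) / p) ^ (p - 1) / p) * y ^ p + 1 := by
        rw [hmul, hsp, hsq, hqval]; ring
    _ = 1 + (((p - 1) / p) ^ (p - 1) / p) * y ^ p := by ring

lemma catoniB_lt_catoniC {p : ℝ} (hp : p ∈ Set.Ioc (1 : ℝ) 2) :
    ((p - 1) / p) ^ (p - 1) / p < catoniC p := by
  obtain ⟨h1, h2⟩ := hp
  have hp0 : (0:ℝ) < p := by linarith
  have hpm : (0:ℝ) < p - 1 := by linarith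
  have hbase : (0:ℝ) < (p - 1) / p := div_pos hpm hp0
  rcases eq_or_lt_of_le h2 with h2e | h2lt
  · subst h2e
    norm_num [catoniC, Real.rpow_one, Real.rpow_zero]
  · -- 1 < p < 2
    have h2p : (0:ℝ) < 2 - p := by linarith
    have hbase2 : (0:ℝ) < (2 - p) / (p - 1) := div_pos h2p hpm
    have hB : (0:ℝ) < ((p - 1) / p) ^ (p - 1) / p :=
      div_pos (Real.rpow_pos_of_pos hbase _) hp0
    have hC : (0:ℝ) < catoniC p :=
      mul_pos (Real.rpow_pos_of_pos hbase _) (Real.rpow_pos_of_pos hbase2 _)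
    rw [← Real.exp_log hB, ← Real.exp_log hC, Real.exp_lt_exp]
    have hlogB : Real.log (((p - 1) / p) ^ (p - 1) / p)
        = (p - 1) * (Real.log (p - 1) - Real.log p) - Real.log p := by
      rw [Real.log_div (Real.rpow_pos_of_pos hbase _).ne' hp0.ne',
        Real.log_rpow hbase, Real.log_div hpm.ne' hp0.ne']
    have hlogC : Real.log (catoniC p)
        = p / 2 * (Real.log (p - 1) - Real.log p)
          + (2 - p) / 2 * (Real.log (2 - p) - Real.log (p - 1)) := by
      rw [catoniC, Real.log_mul (Real.rpow_pos_of_pos hbase _).ne'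
        (Real.rpow_pos_of_pos hbase2 _).ne', Real.log_rpow hbase, Real.log_rpow hbase2,
        Real.log_div hpm.ne' hp0.ne', Real.log_div h2p.ne' hpm.ne']
    rw [hlogB, hlogC]
    -- reduces to 0 < (p/2) log p + ((2-p)/2) log (2-p)
    have key1 : (p - 1) / p < Real.log p := by
      have := Real.log_lt_sub_one_of_pos (x := p⁻¹) (by positivity)
        (by rw [ne_eq, inv_eq_one]; linarith)
      rw [Real.log_inv] at this
      have h3 : p⁻¹ - 1 = -((p - 1) / p) := by field_simp; ring
      rw [h3] at this
      linarith
    have key2 : -((p - 1) / (2 - p)) ≤ Real.log (2 - p) := by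
      have := Real.log_le_sub_one_of_pos (x := (2 - p)⁻¹) (by positivity)
      rw [Real.log_inv] at this
      have h3 : (2 - p)⁻¹ - 1 = (p - 1) / (2 - p) := by field_simp; ring
      rw [h3] at this
      linarith
    have key1' : p - 1 < p * Real.log p := by
      have := (mul_lt_mul_of_pos_left key1 hp0)
      rw [mul_div_cancel₀ _ hp0.ne'] at this
      linarith
    have key2' : -(p - 1) ≤ (2 - p) * Real.log (2 - p) := by
      have := (mul_le_mul_of_nonneg_left key2 h2p.le)
      rw [mul_neg, mul_div_cancel₀ _ h2p.ne'] at this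
      linarith
    nlinarith [key1', key2']

lemma catoni_pos {p : ℝ} (hp : p ∈ Set.Ioc (1 : ℝ) 2) (x : ℝ) :
    0 < 1 + x + catoniC p * |x| ^ p := by
  obtain ⟨h1, h2⟩ := hp
  have hx : -|x| ≤ x := neg_abs_le x
  have habs : (0:ℝ) ≤ |x| := abs_nonneg x
  have key : 0 < 1 - |x| + catoniC p * |x| ^ p := by
    rcases eq_or_lt_of_le habs with h0 | h0
    · rw [← h0]
      rw [Real.zero_rpow (by linarith : p ≠ 0)]
      norm_num
    · have hy := catoni_young h1 habs
      have hlt := catoniB_lt_catoniC ⟨h1, h2⟩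
      have hyp : (0:ℝ) < |x| ^ p := Real.rpow_pos_of_pos h0 _
      nlinarith
  linarith

lemma ville_ineq {Ω : Type*} {m : MeasurableSpace Ω} {P : Measure Ω} [IsProbabilityMeasure P]
    {𝒢 : Filtration ℕ m} {F : ℕ → Ω → ℝ} (hF : Supermartingale F 𝒢 P)
    (hnn : ∀ n ω, 0 ≤ F n ω) {ε : ℝ} (hε : 0 < ε) (hF0 : ∫ ω, F 0 ω ∂P ≤ 1) :
    P {ω | ∃ n, ε ≤ F n ω} ≤ ENNReal.ofReal (1 / ε) := by
  have hFm : ∀ k, Measurable (F k) :=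
    fun k => ((hF.stronglyAdapted k).mono (𝒢.le k)).measurable
  set E : ℕ → Set Ω := fun N => ⋃ k ≤ N, {ω | ε ≤ F k ω} with hE
  have hEmeas : ∀ N, MeasurableSet (E N) := fun N =>
    MeasurableSet.iUnion fun k => MeasurableSet.iUnion fun _ =>
      measurableSet_le measurable_const (hFm k)
  have hEmono : Monotone E := fun a b hab =>
    Set.iUnion_mono fun k => Set.iUnion_subset fun h => Set.subset_iUnion_of_subset
      (le_trans h hab) (by simp)
  have hset : {ω | ∃ n, ε ≤ F n ω} = ⋃ N, E N := by
    ext ω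
    simp only [hE, Set.mem_setOf_eq, Set.mem_iUnion]
    exact ⟨fun ⟨n, h⟩ => ⟨n, n, le_rfl, h⟩, fun ⟨_, k, _, h⟩ => ⟨k, h⟩⟩
  rw [hset, (hEmono.directed_le).measure_iUnion]
  refine iSup_le fun N => ?_
  -- finite-horizon bound via optional stopping
  set τ : Ω → ℕ∞ := fun ω => (hittingBtwn F (Set.Ici ε) 0 N ω : ℕ) with hτdef
  have hτ : IsStoppingTime 𝒢 τ := Adapted.isStoppingTime_hittingBtwn hF.stronglyAdapted.adapted measurableSet_Ici
  have hτle : ∀ ω, τ ω ≤ N := fun ω => ENat.coe_le_coe.mpr (hittingBtwn_le ω)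
  have hsub := hF.neg
  have hsvint : Integrable (stoppedValue F τ) P := by
    have := hsub.integrable_stoppedValue hτ hτle
    have heq : stoppedValue (-F) τ = -(stoppedValue F τ) := rfl
    rw [heq] at this
    simpa using this.neg
  have hsv_ge : ∀ ω ∈ E N, ε ≤ stoppedValue F τ ω := by
    intro ω hω
    simp only [hE, Set.mem_iUnion, Set.mem_setOf_eq] at hω
    obtain ⟨k, hk, hωk⟩ := hω
    exact stoppedValue_hittingBtwn_mem ⟨k, ⟨Nat.zero_le _, hk⟩, hωk⟩
  have hsv_le : ∫ ω, stoppedValue F τ ω ∂P ≤ ∫ ω, F 0 ω ∂P := by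
    have := hsub.expected_stoppedValue_mono (isStoppingTime_const 𝒢 0) hτ
      (fun ω => WithTop.coe_le_coe.mpr (Nat.zero_le _)) hτle
    have heq : stoppedValue (-F) τ = -(stoppedValue F τ) := rfl
    have heq0 : stoppedValue (-F) (fun _ => ((0 : ℕ) : ℕ∞)) = -(F 0) := rfl
    replace this : ∫ ω, stoppedValue (-F) (fun _ => ((0 : ℕ) : ℕ∞)) ω ∂P ≤
        ∫ ω, stoppedValue (-F) τ ω ∂P := this
    rw [heq, heq0] at this
    simp only [Pi.neg_apply, integral_neg, neg_le_neg_iff] at this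
    exact this
  have hkey : ε * (P (E N)).toReal ≤ 1 := by
    calc ε * (P (E N)).toReal ≤ ∫ ω in E N, stoppedValue F τ ω ∂P :=
          setIntegral_ge_of_const_le_real (hEmeas N) (measure_ne_top _ _) hsv_ge
            hsvint.integrableOn
      _ ≤ ∫ ω, stoppedValue F τ ω ∂P :=
          setIntegral_le_integral hsvint (Filter.Eventually.of_forall fun ω => hnn _ ω)
      _ ≤ 1 := le_trans hsv_le hF0
  rw [ENNReal.le_ofReal_iff_toReal_le (measure_ne_top _ _) (by positivity)]
  rw [le_div_iff₀ hε]
  linarith [hkey]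

open MeasurableSpace in
lemma catoni_oneSided {Ω : Type*} {m : MeasurableSpace Ω} (P : Measure Ω)
    [IsProbabilityMeasure P]
    {p c v : ℝ} (hp1 : 1 < p) (hc : 0 ≤ c) (hv : 0 ≤ v)
    {ψ : ℝ → ℝ} (hψm : Measurable ψ) (hψ : ∀ x : ℝ, Real.exp (ψ x) ≤ 1 + x + c * |x| ^ p)
    {Y : ℕ → Ω → ℝ} (hYm : ∀ i, StronglyMeasurable (Y i))
    (hind : iIndepFun Y P)
    (hYint : ∀ i, Integrable (Y i) P) (hY0 : ∀ i, ∫ ω, Y i ω ∂P = 0)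
    (hmi : ∀ i, Integrable (fun ω => |Y i ω| ^ p) P) (hm : ∀ i, ∫ ω, |Y i ω| ^ p ∂P ≤ v)
    {l : ℕ → ℝ} (hl : ∀ i, 0 < l i) {ε : ℝ} (hε : 0 < ε) :
    P {ω | ∃ n : ℕ, Real.log ε + c * v * ∑ i ∈ Finset.range (n + 1), l i ^ p ≤
        ∑ i ∈ Finset.range (n + 1), ψ (l i * Y i ω)} ≤ ENNReal.ofReal (1 / ε) := by
  set k : ℕ → ℝ := fun i => c * v * l i ^ p with hkdef
  have hk : ∀ i, 0 ≤ k i := fun i =>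
    mul_nonneg (mul_nonneg hc hv) (Real.rpow_nonneg (hl i).le _)
  set h : ℕ → ℝ → ℝ := fun i x => Real.exp (ψ (l i * x) - k i) with hhdef
  have hhm : ∀ i, Measurable (h i) := fun i =>
    ((hψm.comp (measurable_id.const_mul (l i))).sub measurable_const).exp
  set g : ℕ → Ω → ℝ := fun i ω => h i (Y i ω) with hgdef
  have hgm : ∀ i, Measurable (g i) := fun i => (hhm i).comp (hYm i).measurable
  have hgpos : ∀ i ω, 0 < g i ω := fun i ω => Real.exp_pos _
  set bnd : ℕ → Ω → ℝ := fun i ω => 1 + l i * Y i ω + c * l i ^ p * |Y i ω| ^ p with hbnddef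
  have habs : ∀ i ω, |l i * Y i ω| ^ p = l i ^ p * |Y i ω| ^ p := fun i ω => by
    rw [abs_mul, abs_of_pos (hl i), Real.mul_rpow (hl i).le (abs_nonneg _)]
  have hgb : ∀ i ω, Real.exp (ψ (l i * Y i ω)) ≤ bnd i ω := fun i ω => by
    have := hψ (l i * Y i ω)
    rw [habs] at this
    simp only [hbnddef]
    nlinarith [this]
  have hbint : ∀ i, Integrable (bnd i) P := fun i =>
    (((integrable_const (1:ℝ)).add ((hYint i).const_mul (l i))).add
      ((hmi i).const_mul (c * l i ^ p)))
  have hexpm : ∀ i, Measurable (fun ω => Real.exp (ψ (l i * Y i ω))) := fun i =>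
    (hψm.comp (((hYm i).measurable).const_mul (l i))).exp
  have hexpint : ∀ i, Integrable (fun ω => Real.exp (ψ (l i * Y i ω))) P := fun i =>
    Integrable.mono' (hbint i) (hexpm i).aestronglyMeasurable
      (Filter.Eventually.of_forall fun ω => by
        rw [Real.norm_eq_abs, abs_of_pos (Real.exp_pos _)]; exact hgb i ω)
  have hgeq : ∀ i, g i = fun ω => Real.exp (-k i) * Real.exp (ψ (l i * Y i ω)) := fun i =>
    funext fun ω => by rw [← Real.exp_add, hgdef, hhdef]; ring_nf
  have hgint : ∀ i, Integrable (g i) P := fun i => by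
    rw [hgeq i]; exact (hexpint i).const_mul _
  have hgmean : ∀ i, ∫ ω, g i ω ∂P ≤ 1 := by
    intro i
    have hbndval : ∫ ω, bnd i ω ∂P ≤ 1 + k i := by
      have h1 : Integrable (fun ω => 1 + l i * Y i ω) P :=
        (integrable_const (1:ℝ)).add ((hYint i).const_mul (l i))
      have h2 : Integrable (fun ω => c * l i ^ p * |Y i ω| ^ p) P :=
        (hmi i).const_mul _
      have : ∫ ω, bnd i ω ∂P = (∫ ω, (1 + l i * Y i ω) ∂P)
          + ∫ ω, c * l i ^ p * |Y i ω| ^ p ∂P := integral_add h1 h2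
      rw [this, integral_add (integrable_const _) ((hYint i).const_mul (l i)),
        integral_const, integral_const_mul, integral_const_mul, hY0 i]
      simp only [measure_univ, probReal_univ, ENNReal.toReal_one, smul_eq_mul, one_mul, mul_zero, add_zero]
      have := mul_le_mul_of_nonneg_left (hm i)
        (mul_nonneg hc (Real.rpow_nonneg (hl i).le p))
      simp only [hkdef]
      nlinarith [this]
    have hmono : ∫ ω, Real.exp (ψ (l i * Y i ω)) ∂P ≤ 1 + k i :=
      le_trans (integral_mono (hexpint i) (hbint i) (hgb i)) hbndval
    rw [hgeq i, integral_const_mul]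
    calc Real.exp (-k i) * ∫ ω, Real.exp (ψ (l i * Y i ω)) ∂P
        ≤ Real.exp (-k i) * (1 + k i) :=
          mul_le_mul_of_nonneg_left hmono (Real.exp_pos _).le
      _ ≤ Real.exp (-k i) * Real.exp (k i) := by
          have := Real.add_one_le_exp (k i)
          nlinarith [Real.exp_pos (-k i)]
      _ = 1 := by rw [← Real.exp_add, neg_add_cancel, Real.exp_zero]
  set F : ℕ → Ω → ℝ := fun n ω => ∏ i ∈ Finset.range (n + 1), g i ω with hFdef
  have hFnn : ∀ n ω, 0 ≤ F n ω := fun n ω =>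
    Finset.prod_nonneg fun i _ => (hgpos i ω).le
  have hgind : iIndepFun g P := hind.comp h hhm
  have hFeq : ∀ n, F (n + 1) = F n * g (n + 1) := fun n =>
    funext fun ω => Finset.prod_range_succ _ _
  have hFint : ∀ n, Integrable (F n) P := by
    intro n
    induction n with
    | zero => simpa [hFdef, Finset.prod_range_one] using hgint 0
    | succ n ih =>
      rw [hFeq n]
      have hIF : IndepFun (∏ j ∈ Finset.range (n + 1), g j) (g (n + 1)) P :=
        hgind.indepFun_finsetProd_of_notMem
          (fun i => hgm i) Finset.notMem_range_self
      have hprodeq : (∏ j ∈ Finset.range (n + 1), g j) = F n := by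
        funext ω; simp [hFdef, Finset.prod_apply]
      rw [hprodeq] at hIF
      exact hIF.integrable_mul ih (hgint (n + 1))
  set 𝒢 : Filtration ℕ m := Filtration.natural Y hYm with h𝒢def
  have hadp : StronglyAdapted 𝒢 F := by
    intro n
    have hgi : ∀ i, i ≤ n → Measurable[𝒢 n] (g i) := by
      intro i hi
      have h1 : Measurable[MeasurableSpace.comap (Y i) (borel ℝ)] (g i) :=
        (hhm i).comp (comap_measurable (Y i))
      have h2 : MeasurableSpace.comap (Y i) (borel ℝ) ≤ 𝒢 n := by
        exact le_biSup (fun j => MeasurableSpace.comap (Y j) (borel ℝ)) hi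
      exact h1.mono h2 le_rfl
    exact (Finset.measurable_prod (Finset.range (n + 1)) fun i hi =>
      hgi i (Nat.lt_succ_iff.mp (Finset.mem_range.mp hi))).stronglyMeasurable
  have hstep : ∀ n, (P[F (n + 1)|𝒢 n]) ≤ᵐ[P] F n := by
    intro n
    have hintmul : Integrable (F n * g (n + 1)) P := by rw [← hFeq n]; exact hFint (n + 1)
    have hpull := condExp_mul_of_stronglyMeasurable_left (μ := P) (m := 𝒢 n)
      (hadp n) hintmul (hgint (n + 1))
    have hsm : StronglyMeasurable[MeasurableSpace.comap (Y (n + 1)) (borel ℝ)] (g (n + 1)) :=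
      ((hhm (n + 1)).comp (comap_measurable (Y (n + 1)))).stronglyMeasurable
    have hindep' : Indep (MeasurableSpace.comap (Y (n + 1)) (borel ℝ)) (𝒢 n) P :=
      hind.indep_comap_natural_of_lt hYm (Nat.lt_succ_self n)
    have hcond : (P[g (n + 1)|𝒢 n]) =ᵐ[P] fun _ => ∫ ω, g (n + 1) ω ∂P :=
      condExp_indep_eq ((hYm (n + 1)).measurable.comap_le) (𝒢.le n) hsm hindep'
    rw [hFeq n]
    filter_upwards [hpull, hcond] with ω h1 h2
    rw [h1, Pi.mul_apply, h2]
    exact mul_le_of_le_one_right (hFnn n ω) (hgmean (n + 1))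
  have hsuper : Supermartingale F 𝒢 P := supermartingale_nat hadp hFint hstep
  have hF0 : ∫ ω, F 0 ω ∂P ≤ 1 := by
    have : F 0 = g 0 := funext fun ω => by simp [hFdef, Finset.prod_range_one]
    rw [this]; exact hgmean 0
  have hFexp : ∀ n ω, F n ω =
      Real.exp (∑ i ∈ Finset.range (n + 1), ψ (l i * Y i ω)
        - c * v * ∑ i ∈ Finset.range (n + 1), l i ^ p) := by
    intro n ω
    rw [hFdef]
    simp only [hgdef, hhdef]
    rw [← Real.exp_sum, Finset.sum_sub_distrib, ← Finset.mul_sum]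
  have hsetEq : {ω | ∃ n : ℕ, Real.log ε + c * v * ∑ i ∈ Finset.range (n + 1), l i ^ p ≤
      ∑ i ∈ Finset.range (n + 1), ψ (l i * Y i ω)} = {ω | ∃ n, ε ≤ F n ω} := by
    ext ω
    simp only [Set.mem_setOf_eq]
    refine exists_congr fun n => ?_
    rw [hFexp n ω, ← Real.log_le_iff_le_exp hε]
    constructor <;> intro h' <;> linarith
  rw [hsetEq]
  exact ville_ineq hsuper hFnn hε hF0

theorem catoni_confidence_sequence {Ω : Type*} {m : MeasurableSpace Ω} (P : Measure Ω)
    [IsProbabilityMeasure P]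
    (p v_p μ α : ℝ) (hp : p ∈ Set.Ioc (1 : ℝ) 2) (hα : α ∈ Set.Ioo (0 : ℝ) 1)
    (φ : ℝ → ℝ) (hφ : Monotone φ)
    (hφ_bound : ∀ x : ℝ,
      -Real.log (1 - x + catoniC p * |x| ^ p) ≤ φ x ∧
        φ x ≤ Real.log (1 + x + catoniC p * |x| ^ p))
    (X : ℕ → Ω → ℝ) (hXmeas : ∀ i, StronglyMeasurable (X i))
    (hindep : ProbabilityTheory.iIndepFun X P)
    (hident : ∀ i, ProbabilityTheory.IdentDistrib (X i) (X 0) P P)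
    (hmean : ∀ i, ∫ ω, X i ω ∂P = μ)
    (hmom_int : ∀ i, Integrable (fun ω => |X i ω - μ| ^ p) P)
    (hmom : ∀ i, ∫ ω, |X i ω - μ| ^ p ∂P ≤ v_p)
    (l : ℕ → ℝ) (hl : ∀ i, 0 < l i) :
    ENNReal.ofReal (1 - α) ≤
      P {ω | ∀ n : ℕ, 1 ≤ n →
        -Real.log (2 / α) - catoniC p * v_p * ∑ i ∈ Finset.range n, l i ^ p ≤
            (∑ i ∈ Finset.range n, φ (l i * (X i ω - μ))) ∧
          (∑ i ∈ Finset.range n, φ (l i * (X i ω - μ))) ≤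
            Real.log (2 / α) + catoniC p * v_p * ∑ i ∈ Finset.range n, l i ^ p} ∧
    ENNReal.ofReal (1 - α) ≤
      P {ω | ∀ n : ℕ, 1 ≤ n → μ ∈ {x : ℝ |
        |∑ i ∈ Finset.range n, φ (l i * (X i ω - x))| ≤
          Real.log (2 / α) + catoniC p * v_p * ∑ i ∈ Finset.range n, l i ^ p}} := by
  obtain ⟨hp1, hp2⟩ := hp
  obtain ⟨hα0, hα1⟩ := hα
  have hC : 0 ≤ catoniC p := catoniC_nonneg ⟨hp1, hp2⟩
  have hpos : ∀ x : ℝ, 0 < 1 + x + catoniC p * |x| ^ p := catoni_pos ⟨hp1, hp2⟩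
  have hv : 0 ≤ v_p :=
    le_trans (integral_nonneg fun ω => Real.rpow_nonneg (abs_nonneg _) p) (hmom 0)
  have hε : (0:ℝ) < 2 / α := by positivity
  have hL : (0:ℝ) ≤ Real.log (2 / α) := Real.log_nonneg (by rw [le_div_iff₀ hα0]; linarith)
  -- centered variables
  set Y : ℕ → Ω → ℝ := fun i ω => X i ω - μ with hYdef
  have hYm : ∀ i, StronglyMeasurable (Y i) := fun i => (hXmeas i).sub stronglyMeasurable_const
  have habs_le : ∀ y : ℝ, |y| ≤ 1 + |y| ^ p := by
    intro y
    rcases le_or_gt (|y|) 1 with hy | hy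
    · have : (0:ℝ) ≤ |y| ^ p := Real.rpow_nonneg (abs_nonneg _) _
      linarith
    · have h2 : |y| ^ (1:ℝ) ≤ |y| ^ p := Real.rpow_le_rpow_of_exponent_le hy.le hp1.le
      rw [Real.rpow_one] at h2
      linarith
  have hYint : ∀ i, Integrable (Y i) P := fun i =>
    Integrable.mono' ((integrable_const (1:ℝ)).add (hmom_int i))
      (hYm i).aestronglyMeasurable
      (Filter.Eventually.of_forall fun ω => by
        rw [Real.norm_eq_abs]; exact habs_le _)
  have hXint : ∀ i, Integrable (X i) P := by
    intro i
    have : X i = fun ω => Y i ω + μ := by funext ω; simp [hYdef]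
    rw [this]
    exact (hYint i).add (integrable_const μ)
  have hY0 : ∀ i, ∫ ω, Y i ω ∂P = 0 := by
    intro i
    rw [hYdef]
    rw [integral_sub (hXint i) (integrable_const μ), hmean i, integral_const]
    simp
  have hYind : iIndepFun Y P :=
    hindep.comp (fun _ x => x - μ) (fun _ => measurable_id.sub_const μ)
  -- upper tail
  have hψ1 : ∀ x : ℝ, Real.exp (φ x) ≤ 1 + x + catoniC p * |x| ^ p := fun x =>
    le_trans (Real.exp_le_exp.mpr (hφ_bound x).2) (le_of_eq (Real.exp_log (hpos x)))
  have hbad1 := catoni_oneSided P hp1 hC hv hφ.measurable hψ1 hYm hYind hYint hY0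
    hmom_int hmom hl hε
  -- lower tail
  have hψ2m : Measurable (fun x : ℝ => -φ (-x)) := (hφ.measurable.comp measurable_neg).neg
  have hψ2 : ∀ x : ℝ, Real.exp (-φ (-x)) ≤ 1 + x + catoniC p * |x| ^ p := by
    intro x
    have h1 := (hφ_bound (-x)).1
    rw [abs_neg, sub_neg_eq_add] at h1
    have h2 : -φ (-x) ≤ Real.log (1 + x + catoniC p * |x| ^ p) := by linarith
    exact le_trans (Real.exp_le_exp.mpr h2) (le_of_eq (Real.exp_log (hpos x)))
  set Y2 : ℕ → Ω → ℝ := fun i ω => μ - X i ω with hY2def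
  have hY2m : ∀ i, StronglyMeasurable (Y2 i) := fun i => stronglyMeasurable_const.sub (hXmeas i)
  have hY2eq : ∀ i, Y2 i = fun ω => -(Y i ω) := fun i => by funext ω; simp [hYdef, hY2def]
  have hY2int : ∀ i, Integrable (Y2 i) P := fun i => by rw [hY2eq i]; exact (hYint i).neg
  have hY20 : ∀ i, ∫ ω, Y2 i ω ∂P = 0 := fun i => by
    rw [hY2eq i, integral_neg, hY0 i, neg_zero]
  have hY2ind : iIndepFun Y2 P :=
    hindep.comp (fun _ x => μ - x) (fun _ => measurable_const.sub measurable_id)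
  have hY2abs : ∀ i, (fun ω => |Y2 i ω| ^ p) = fun ω => |X i ω - μ| ^ p := fun i => by
    funext ω; simp only [hY2def]; rw [abs_sub_comm]
  have hY2mi : ∀ i, Integrable (fun ω => |Y2 i ω| ^ p) P := fun i => by
    rw [hY2abs i]; exact hmom_int i
  have hY2mom : ∀ i, ∫ ω, |Y2 i ω| ^ p ∂P ≤ v_p := fun i => by
    rw [show (∫ ω, |Y2 i ω| ^ p ∂P) = ∫ ω, |X i ω - μ| ^ p ∂P by rw [hY2abs i]]
    exact hmom i
  have hbad2 := catoni_oneSided P hp1 hC hv hψ2m hψ2 hY2m hY2ind hY2int hY20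
    hY2mi hY2mom hl hε
  -- rewrite the bad2 event
  have hbad2' : P {ω | ∃ n : ℕ, Real.log (2 / α)
      + catoniC p * v_p * ∑ i ∈ Finset.range (n + 1), l i ^ p ≤
      ∑ i ∈ Finset.range (n + 1), -φ (l i * (X i ω - μ))} ≤ ENNReal.ofReal (1 / (2 / α)) := by
    have hterm : ∀ (ω : Ω) (i : ℕ), -φ (l i * (X i ω - μ)) = -φ (-(l i * Y2 i ω)) := by
      intro ω i
      have : -(l i * Y2 i ω) = l i * (X i ω - μ) := by simp only [hY2def]; ring
      rw [this]
    have hseteq2 : {ω : Ω | ∃ n : ℕ, Real.log (2 / α)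
        + catoniC p * v_p * ∑ i ∈ Finset.range (n + 1), l i ^ p ≤
        ∑ i ∈ Finset.range (n + 1), -φ (l i * (X i ω - μ))}
        = {ω : Ω | ∃ n : ℕ, Real.log (2 / α)
        + catoniC p * v_p * ∑ i ∈ Finset.range (n + 1), l i ^ p ≤
        ∑ i ∈ Finset.range (n + 1), -φ (-(l i * Y2 i ω))} := by
      ext ω
      simp only [Set.mem_setOf_eq]
      exact exists_congr fun n => by rw [Finset.sum_congr rfl fun i _ => hterm ω i]
    exact le_trans (le_of_eq (congrArg P hseteq2)) hbad2
  have hSmeas : ∀ n : ℕ, Measurable (fun ω => ∑ i ∈ Finset.range n, φ (l i * (X i ω - μ))) :=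
    fun n => Finset.measurable_sum _ fun i _ =>
      hφ.measurable.comp (((hXmeas i).measurable.sub_const μ).const_mul (l i))
  have hgoodmeas : MeasurableSet {ω : Ω | ∀ n : ℕ, 1 ≤ n →
      -Real.log (2 / α) - catoniC p * v_p * ∑ i ∈ Finset.range n, l i ^ p ≤
          (∑ i ∈ Finset.range n, φ (l i * (X i ω - μ))) ∧
        (∑ i ∈ Finset.range n, φ (l i * (X i ω - μ))) ≤
          Real.log (2 / α) + catoniC p * v_p * ∑ i ∈ Finset.range n, l i ^ p} := by
    have heq : {ω : Ω | ∀ n : ℕ, 1 ≤ n →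
        -Real.log (2 / α) - catoniC p * v_p * ∑ i ∈ Finset.range n, l i ^ p ≤
            (∑ i ∈ Finset.range n, φ (l i * (X i ω - μ))) ∧
          (∑ i ∈ Finset.range n, φ (l i * (X i ω - μ))) ≤
            Real.log (2 / α) + catoniC p * v_p * ∑ i ∈ Finset.range n, l i ^ p}
        = ⋂ n : ℕ, {ω : Ω | 1 ≤ n →
        -Real.log (2 / α) - catoniC p * v_p * ∑ i ∈ Finset.range n, l i ^ p ≤
            (∑ i ∈ Finset.range n, φ (l i * (X i ω - μ))) ∧
          (∑ i ∈ Finset.range n, φ (l i * (X i ω - μ))) ≤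
            Real.log (2 / α) + catoniC p * v_p * ∑ i ∈ Finset.range n, l i ^ p} := by
      ext ω; simp only [Set.mem_setOf_eq, Set.mem_iInter]
    rw [heq]
    refine MeasurableSet.iInter fun n => ?_
    by_cases hn : 1 ≤ n
    · have heq2 : {ω : Ω | 1 ≤ n →
          -Real.log (2 / α) - catoniC p * v_p * ∑ i ∈ Finset.range n, l i ^ p ≤
              (∑ i ∈ Finset.range n, φ (l i * (X i ω - μ))) ∧
            (∑ i ∈ Finset.range n, φ (l i * (X i ω - μ))) ≤
              Real.log (2 / α) + catoniC p * v_p * ∑ i ∈ Finset.range n, l i ^ p}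
          = {ω : Ω | -Real.log (2 / α) - catoniC p * v_p * ∑ i ∈ Finset.range n, l i ^ p ≤
              ∑ i ∈ Finset.range n, φ (l i * (X i ω - μ))}
            ∩ {ω : Ω | (∑ i ∈ Finset.range n, φ (l i * (X i ω - μ))) ≤
              Real.log (2 / α) + catoniC p * v_p * ∑ i ∈ Finset.range n, l i ^ p} := by
        ext ω; simp [hn]
      rw [heq2]
      exact (measurableSet_le measurable_const (hSmeas n)).inter
        (measurableSet_le (hSmeas n) measurable_const)
    · have heq2 : {ω : Ω | 1 ≤ n →
          -Real.log (2 / α) - catoniC p * v_p * ∑ i ∈ Finset.range n, l i ^ p ≤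
              (∑ i ∈ Finset.range n, φ (l i * (X i ω - μ))) ∧
            (∑ i ∈ Finset.range n, φ (l i * (X i ω - μ))) ≤
              Real.log (2 / α) + catoniC p * v_p * ∑ i ∈ Finset.range n, l i ^ p}
          = Set.univ := by
        ext ω; simp [hn]
      rw [heq2]
      exact MeasurableSet.univ
  have hsubbad : {ω : Ω | ∀ n : ℕ, 1 ≤ n →
      -Real.log (2 / α) - catoniC p * v_p * ∑ i ∈ Finset.range n, l i ^ p ≤
          (∑ i ∈ Finset.range n, φ (l i * (X i ω - μ))) ∧
        (∑ i ∈ Finset.range n, φ (l i * (X i ω - μ))) ≤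
          Real.log (2 / α) + catoniC p * v_p * ∑ i ∈ Finset.range n, l i ^ p}ᶜ ⊆
      {ω : Ω | ∃ n : ℕ, Real.log (2 / α)
        + catoniC p * v_p * ∑ i ∈ Finset.range (n + 1), l i ^ p ≤
        ∑ i ∈ Finset.range (n + 1), φ (l i * Y i ω)} ∪
      {ω : Ω | ∃ n : ℕ, Real.log (2 / α)
        + catoniC p * v_p * ∑ i ∈ Finset.range (n + 1), l i ^ p ≤
        ∑ i ∈ Finset.range (n + 1), -φ (l i * (X i ω - μ))} := by
    intro ω hω
    simp only [Set.mem_compl_iff, Set.mem_setOf_eq] at hω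
    push_neg at hω
    obtain ⟨n, hn, hfail⟩ := hω
    obtain ⟨k, rfl⟩ : ∃ k, n = k + 1 := ⟨n - 1, by omega⟩
    by_cases hA : -Real.log (2 / α)
        - catoniC p * v_p * ∑ i ∈ Finset.range (k + 1), l i ^ p ≤
        ∑ i ∈ Finset.range (k + 1), φ (l i * (X i ω - μ))
    · have hB := hfail hA
      refine Set.mem_union_left _ ?_
      refine ⟨k, ?_⟩
      have hYe : (∑ i ∈ Finset.range (k + 1), φ (l i * Y i ω))
          = ∑ i ∈ Finset.range (k + 1), φ (l i * (X i ω - μ)) := rfl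
      rw [hYe]
      linarith
    · push_neg at hA
      refine Set.mem_union_right _ ?_
      refine ⟨k, ?_⟩
      rw [Finset.sum_neg_distrib]
      linarith
  have hbadunion : P ({ω : Ω | ∀ n : ℕ, 1 ≤ n →
      -Real.log (2 / α) - catoniC p * v_p * ∑ i ∈ Finset.range n, l i ^ p ≤
          (∑ i ∈ Finset.range n, φ (l i * (X i ω - μ))) ∧
        (∑ i ∈ Finset.range n, φ (l i * (X i ω - μ))) ≤
          Real.log (2 / α) + catoniC p * v_p * ∑ i ∈ Finset.range n, l i ^ p}ᶜ)
      ≤ ENNReal.ofReal α := by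
    refine le_trans (measure_mono hsubbad) (le_trans (measure_union_le _ _) ?_)
    refine le_trans (add_le_add hbad1 hbad2') ?_
    rw [← ENNReal.ofReal_add (by positivity) (by positivity)]
    apply ENNReal.ofReal_le_ofReal
    rw [one_div_div]
    linarith
  have hmain : ENNReal.ofReal (1 - α) ≤ P {ω : Ω | ∀ n : ℕ, 1 ≤ n →
      -Real.log (2 / α) - catoniC p * v_p * ∑ i ∈ Finset.range n, l i ^ p ≤
          (∑ i ∈ Finset.range n, φ (l i * (X i ω - μ))) ∧
        (∑ i ∈ Finset.range n, φ (l i * (X i ω - μ))) ≤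
          Real.log (2 / α) + catoniC p * v_p * ∑ i ∈ Finset.range n, l i ^ p} := by
    have hsum := prob_add_prob_compl (μ := P) hgoodmeas
    have h2 : (1:ℝ≥0∞) ≤ P {ω : Ω | ∀ n : ℕ, 1 ≤ n →
        -Real.log (2 / α) - catoniC p * v_p * ∑ i ∈ Finset.range n, l i ^ p ≤
            (∑ i ∈ Finset.range n, φ (l i * (X i ω - μ))) ∧
          (∑ i ∈ Finset.range n, φ (l i * (X i ω - μ))) ≤
            Real.log (2 / α) + catoniC p * v_p * ∑ i ∈ Finset.range n, l i ^ p}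
        + ENNReal.ofReal α := by
      rw [← hsum]
      exact add_le_add le_rfl hbadunion
    calc ENNReal.ofReal (1 - α) = 1 - ENNReal.ofReal α := by
          rw [← ENNReal.ofReal_one, ← ENNReal.ofReal_sub _ hα0.le]
      _ ≤ _ := by
          rw [tsub_le_iff_right]
          exact h2
  refine ⟨hmain, le_trans hmain (measure_mono ?_)⟩
  intro ω hω n hn
  obtain ⟨h1, h2⟩ := hω n hn
  simp only [Set.mem_setOf_eq]
  exact abs_le.mpr ⟨by linarith, h2⟩
end
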